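/- Fix λ_1,…,λ_{m−1} ∈ ℂ and R_1,…,R_{m−1} > 0 such that S = {z ∈ ℂ : |z| ≤ 1 and |z − λ_j| ≥ R_j for j = 1,…,m−1} is nonempty. For every finitely supported family of complex coefficients p = (p_{kl}) and every ε > 0 there exists C(p,ε) ≥ 0 such that: for every unital C*-algebra A, every δ ≥ 0, and every a ∈ A with ‖a‖ ≤ 1, ‖a a* − a* a‖ ≤ δ, and each a − λ_j·1 invertible with ‖(a − λ_j·1)^{−1}‖ ≤ R_j^{−1}, one has ‖Im p(a,a*)‖ ≤ max_{z∈S} |Im p(z,z̄)| + ε + C(p,ε)·δ, where Im b = (b − b*)/(2i) for b ∈ A and Im w denotes the imaginary part of w ∈ ℂ. -/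

import Mathlib

open scoped ComplexConjugate

/-- Evaluation of a finitely supported coefficient family `p = (p_{kl})` at an element `a`
of a star `ℂ`-algebra: `p(a,a*) = ∑ p_{kl} a^k (a*)^l`. -/
noncomputable def polyEvalA {A : Type*} [Ring A] [StarRing A] [Algebra ℂ A]
    (p : (ℕ × ℕ) →₀ ℂ) (a : A) : A :=
  p.sum fun kl c => c • (a ^ kl.1 * star a ^ kl.2)

/-- The function `z ↦ p(z, z̄) = ∑ p_{kl} z^k conj(z)^l`. -/
noncomputable def polyEvalC (p : (ℕ × ℕ) →₀ ℂ) (z : ℂ) : ℂ :=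
  p.sum fun kl c => c * z ^ kl.1 * (conj z) ^ kl.2


open Filter Topology
open scoped ENNReal

universe v

namespace Stmt5Aux

variable (A : ℕ → Type v) [∀ n, CStarAlgebra (A n)] [∀ n, Nontrivial (A n)]

/-- The ideal of sequences tending to zero in norm. -/
def c0I : Submodule ℂ (lp A ∞) where
  carrier := {x | Tendsto (fun n => ‖x n‖) atTop (𝓝 0)}
  zero_mem' := by
    simpa using tendsto_const_nhds (α := ℝ) (f := atTop (α := ℕ))
  add_mem' := by
    intro x y hx hy
    have h := hx.add hy
    rw [add_zero] at h
    refine squeeze_zero (fun n => norm_nonneg _) (fun n => ?_) h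
    simp only [lp.coeFn_add, Pi.add_apply]
    exact norm_add_le _ _
  smul_mem' := by
    intro c x hx
    have h := hx.const_mul ‖c‖
    rw [mul_zero] at h
    refine squeeze_zero (fun n => norm_nonneg _) (fun n => ?_) h
    simp only [lp.coeFn_smul, Pi.smul_apply]
    exact (norm_smul c (x n)).le

variable {A}

lemma mem_c0I_iff {x : lp A ∞} : x ∈ c0I A ↔ Tendsto (fun n => ‖x n‖) atTop (𝓝 0) := Iff.rfl

lemma norm_apply_le (x : lp A ∞) (n : ℕ) : ‖x n‖ ≤ ‖x‖ :=
  lp.norm_apply_le_norm ENNReal.top_ne_zero x n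

lemma isClosed_c0I : IsClosed ((c0I A : Set (lp A ∞))) := by
  refine isClosed_of_closure_subset fun x hx => ?_
  rw [SetLike.mem_coe, mem_c0I_iff, NormedAddCommGroup.tendsto_nhds_zero]
  intro ε hε
  rw [Metric.mem_closure_iff] at hx
  obtain ⟨y, hy, hxy⟩ := hx (ε/2) (by linarith)
  rw [SetLike.mem_coe, mem_c0I_iff, NormedAddCommGroup.tendsto_nhds_zero] at hy
  filter_upwards [hy (ε/2) (by linarith)] with n hn
  have h2 : ‖x n - y n‖ ≤ ‖x - y‖ := by
    have h3 : (x - y) n = x n - y n := by rw [lp.coeFn_sub]; rfl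
    rw [← h3]; exact norm_apply_le _ _
  have h4 : ‖x n‖ ≤ ‖y n‖ + ‖x n - y n‖ := by
    calc ‖x n‖ = ‖y n + (x n - y n)‖ := by congr 1; abel
    _ ≤ ‖y n‖ + ‖x n - y n‖ := norm_add_le _ _
  rw [dist_eq_norm] at hxy
  rw [Real.norm_eq_abs, abs_of_nonneg (norm_nonneg _)] at hn ⊢
  linarith

instance : IsClosed ((c0I A : Set (lp A ∞))) := isClosed_c0I

/-- The quotient "asymptotic" algebra. -/
abbrev CalkQ := lp A ∞ ⧸ c0I A

variable (A) in
noncomputable def qmk (x : lp A ∞) : CalkQ (A := A) := Submodule.Quotient.mk x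

lemma qmk_surjective : Function.Surjective (qmk A) := Submodule.Quotient.mk_surjective _

noncomputable instance : Mul (CalkQ (A := A)) where
  mul := Quotient.map₂' (· * ·) <| by
    intro x x' hx y y' hy
    rw [Submodule.quotientRel_def] at hx hy ⊢
    have key : x * y - x' * y' = x * (y - y') + (x - x') * y' := by noncomm_ring
    rw [key]
    refine Submodule.add_mem _ ?_ ?_
    · rw [mem_c0I_iff] at hy ⊢
      have h := hy.const_mul ‖x‖
      rw [mul_zero] at h
      refine squeeze_zero (fun n => norm_nonneg _) (fun n => ?_) h
      rw [lp.infty_coeFn_mul]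
      exact (norm_mul_le _ _).trans (by gcongr; exact norm_apply_le _ _)
    · rw [mem_c0I_iff] at hx ⊢
      have h := hx.mul_const ‖y'‖
      rw [zero_mul] at h
      refine squeeze_zero (fun n => norm_nonneg _) (fun n => ?_) h
      rw [lp.infty_coeFn_mul]
      exact (norm_mul_le _ _).trans (by gcongr; exact norm_apply_le _ _)

noncomputable instance : One (CalkQ (A := A)) := ⟨qmk A 1⟩

lemma qmk_mul (x y : lp A ∞) : qmk A (x * y) = qmk A x * qmk A y := rfl
lemma qmk_one : qmk A 1 = 1 := rfl
lemma qmk_add (x y : lp A ∞) : qmk A (x + y) = qmk A x + qmk A y := rfl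
lemma qmk_zero : qmk A 0 = 0 := rfl
lemma qmk_smul (c : ℂ) (x : lp A ∞) : qmk A (c • x) = c • qmk A x := rfl

noncomputable instance : Ring (CalkQ (A := A)) :=
  { (inferInstance : AddCommGroup (CalkQ (A := A))) with
    mul := (· * ·)
    one := 1
    mul_assoc := fun a b c => Quotient.inductionOn₃' a b c fun x y z =>
      congrArg (qmk A) (mul_assoc x y z)
    one_mul := fun a => Quotient.inductionOn' a fun x => congrArg (qmk A) (one_mul x)
    mul_one := fun a => Quotient.inductionOn' a fun x => congrArg (qmk A) (mul_one x)
    left_distrib := fun a b c => Quotient.inductionOn₃' a b c fun x y z =>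
      congrArg (qmk A) (left_distrib x y z)
    right_distrib := fun a b c => Quotient.inductionOn₃' a b c fun x y z =>
      congrArg (qmk A) (right_distrib x y z)
    zero_mul := fun a => Quotient.inductionOn' a fun x => congrArg (qmk A) (zero_mul x)
    mul_zero := fun a => Quotient.inductionOn' a fun x => congrArg (qmk A) (mul_zero x) }

lemma qmk_def (x : lp A ∞) : qmk A x = Submodule.Quotient.mk x := rfl

lemma norm_qmk_le (x : lp A ∞) : ‖qmk A x‖ ≤ ‖x‖ :=
  Submodule.Quotient.norm_mk_le _ x

lemma coeFn_sub_apply (x y : lp A ∞) (n : ℕ) : (x - y) n = x n - y n := by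
  rw [lp.coeFn_sub]; rfl

noncomputable instance : StarRing (CalkQ (A := A)) where
  star := Quotient.map' star <| by
    intro x y hxy
    rw [Submodule.quotientRel_def] at hxy ⊢
    rw [mem_c0I_iff] at hxy ⊢
    refine hxy.congr fun n => ?_
    rw [coeFn_sub_apply, coeFn_sub_apply]
    have h1 : (star x) n = star (x n) := rfl
    have h2 : (star y) n = star (y n) := rfl
    rw [h1, h2, ← star_sub, norm_star]
  star_involutive := fun a => Quotient.inductionOn' a fun x => congrArg (qmk A) (star_star x)
  star_mul := fun a b => Quotient.inductionOn₂' a b fun x y => congrArg (qmk A) (star_mul x y)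
  star_add := fun a b => Quotient.inductionOn₂' a b fun x y => congrArg (qmk A) (star_add x y)

lemma qmk_star (x : lp A ∞) : qmk A (star x) = star (qmk A x) := rfl

instance : StarModule ℂ (CalkQ (A := A)) :=
  ⟨fun c a => Quotient.inductionOn' a fun x => congrArg (qmk A) (star_smul c x)⟩

noncomputable instance : Algebra ℂ (CalkQ (A := A)) :=
  Algebra.ofModule
    (fun c a b => Quotient.inductionOn₂' a b fun x y => congrArg (qmk A) (smul_mul_assoc c x y))
    (fun c a b => Quotient.inductionOn₂' a b fun x y => congrArg (qmk A) (mul_smul_comm c x y))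

lemma qmk_algebraMap (c : ℂ) :
    qmk A (algebraMap ℂ (lp A ∞) c) = algebraMap ℂ (CalkQ (A := A)) c := by
  rw [Algebra.algebraMap_eq_smul_one, Algebra.algebraMap_eq_smul_one, ← qmk_one, ← qmk_smul]

noncomputable instance : NormedRing (CalkQ (A := A)) :=
  { (inferInstance : NormedAddCommGroup (CalkQ (A := A))),
    (inferInstance : Ring (CalkQ (A := A))) with
    dist_eq := fun x y => by rw [neg_add_eq_sub, ← dist_eq_norm, dist_comm]
    norm_mul_le := fun a b => by
      refine le_of_forall_pos_le_add fun η hη => ?_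
      have hd : (0:ℝ) < ‖a‖ + ‖b‖ + 2 := by positivity
      set ε := min 1 (η / (‖a‖ + ‖b‖ + 2)) with hεdef
      have hε : 0 < ε := lt_min one_pos (div_pos hη hd)
      obtain ⟨x, hx, hxn⟩ := Submodule.Quotient.norm_mk_lt a hε
      obtain ⟨y, hy, hyn⟩ := Submodule.Quotient.norm_mk_lt b hε
      have hab : a * b = qmk A (x * y) := by rw [qmk_mul, qmk_def, qmk_def, hx, hy]
      have h1 : ‖a * b‖ ≤ ‖x‖ * ‖y‖ := by
        rw [hab]
        exact (norm_qmk_le _).trans (norm_mul_le x y)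
      have hε1 : ε ≤ 1 := min_le_left _ _
      have hε2 : ε * (‖a‖ + ‖b‖ + 2) ≤ η := by
        rw [hεdef]
        calc min 1 (η / (‖a‖ + ‖b‖ + 2)) * (‖a‖ + ‖b‖ + 2)
            ≤ (η / (‖a‖ + ‖b‖ + 2)) * (‖a‖ + ‖b‖ + 2) := by
              gcongr; exact min_le_right _ _
          _ = η := div_mul_cancel₀ η hd.ne'
      nlinarith [norm_nonneg a, norm_nonneg b, norm_nonneg x, norm_nonneg y, hε.le] }

lemma limsup_norm_bddAbove (x : lp A ∞) :
    IsBoundedUnder (· ≤ ·) atTop (fun n => ‖x n‖) :=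
  isBoundedUnder_of ⟨‖x‖, norm_apply_le x⟩

lemma limsup_norm_cobdd (x : lp A ∞) :
    IsCoboundedUnder (· ≤ ·) atTop (fun n => ‖x n‖) :=
  isCoboundedUnder_le_of_le atTop (fun n => norm_nonneg (x n))

lemma limsup_norm_nonneg (x : lp A ∞) :
    0 ≤ limsup (fun n => ‖x n‖) atTop :=
  le_limsup_of_frequently_le (Frequently.of_forall fun n => norm_nonneg _) (limsup_norm_bddAbove x)

lemma limsup_le_norm_qmk (x : lp A ∞) :
    limsup (fun n => ‖x n‖) atTop ≤ ‖qmk A x‖ := by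
  refine le_of_forall_pos_le_add fun η hη => ?_
  have hη3 : 0 < η / 3 := by linarith
  obtain ⟨m, hm, hmn⟩ := Submodule.Quotient.norm_mk_lt (qmk A x) hη3
  have hs : m - x ∈ c0I A := (Submodule.Quotient.eq _).mp (hm.trans (qmk_def x))
  rw [mem_c0I_iff] at hs
  have hev : ∀ᶠ n in atTop, ‖(m - x) n‖ < η / 3 :=
    hs.eventually (eventually_lt_nhds hη3)
  have hfreq : ∃ᶠ n in atTop, limsup (fun n => ‖x n‖) atTop - η / 3 < ‖x n‖ :=
    frequently_lt_of_lt_limsup (limsup_norm_cobdd x) (sub_lt_self _ hη3)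
  obtain ⟨n, h1, h2⟩ := (hfreq.and_eventually hev).exists
  have h3 : ‖x n‖ ≤ ‖m n‖ + ‖(m - x) n‖ := by
    rw [coeFn_sub_apply]
    calc ‖x n‖ = ‖m n - (m n - x n)‖ := by congr 1; abel
      _ ≤ ‖m n‖ + ‖m n - x n‖ := norm_sub_le _ _
  have h4 : ‖m n‖ ≤ ‖m‖ := norm_apply_le m n
  linarith

lemma norm_qmk_le_limsup (x : lp A ∞) :
    ‖qmk A x‖ ≤ limsup (fun n => ‖x n‖) atTop := by
  set L := limsup (fun n => ‖x n‖) atTop with hL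
  have hL0 : 0 ≤ L := limsup_norm_nonneg x
  refine le_of_forall_pos_le_add fun η hη => ?_
  have hev : ∀ᶠ n in atTop, ‖x n‖ < L + η :=
    eventually_lt_of_limsup_lt (by linarith) (limsup_norm_bddAbove x)
  obtain ⟨N, hN⟩ := eventually_atTop.mp hev
  have hymem : Memℓp (fun n => if n < N then x n else 0) ∞ := by
    apply memℓp_infty
    refine ⟨‖x‖, ?_⟩
    rintro r ⟨n, rfl⟩
    dsimp only
    split
    · exact norm_apply_le x n
    · simp [norm_nonneg x]
  set y : lp A ∞ := ⟨fun n => if n < N then x n else 0, hymem⟩ with hy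
  have hyc : y ∈ c0I A := by
    rw [mem_c0I_iff]
    have : ∀ᶠ n in atTop, ‖y n‖ = 0 := by
      filter_upwards [eventually_ge_atTop N] with n hn
      show ‖if n < N then x n else 0‖ = 0
      rw [if_neg (by omega), norm_zero]
    exact Tendsto.congr' (this.mono fun n hn => hn.symm) tendsto_const_nhds
  have hqq : qmk A x = qmk A (x - y) := by
    rw [qmk_def, qmk_def, Submodule.Quotient.eq]
    simpa using hyc
  rw [hqq]
  refine (norm_qmk_le _).trans ?_
  refine lp.norm_le_of_forall_le (by linarith) fun n => ?_
  rw [coeFn_sub_apply]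
  have hyn : y n = (if n < N then x n else 0) := rfl
  rw [hyn]
  by_cases hn : n < N
  · rw [if_pos hn, sub_self, norm_zero]
    linarith
  · rw [if_neg hn, sub_zero]
    exact (hN n (by omega)).le

noncomputable instance : CStarRing (CalkQ (A := A)) where
  norm_mul_self_le := fun a => by
    obtain ⟨x, rfl⟩ := qmk_surjective a
    set L := limsup (fun n => ‖x n‖) atTop with hLdef
    have hL0 : 0 ≤ L := limsup_norm_nonneg x
    have h1 : ‖qmk A x‖ ≤ L := norm_qmk_le_limsup x
    have hbdd2 : IsBoundedUnder (· ≤ ·) atTop (fun n => ‖x n‖ * ‖x n‖) :=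
      isBoundedUnder_of ⟨‖x‖ * ‖x‖, fun n =>
        mul_le_mul (norm_apply_le x n) (norm_apply_le x n) (norm_nonneg _) (norm_nonneg _)⟩
    have h2 : limsup (fun n => ‖x n‖ * ‖x n‖) atTop ≤ ‖qmk A (star x * x)‖ := by
      refine le_trans (le_of_eq (limsup_congr (Eventually.of_forall fun n => ?_)))
        (limsup_le_norm_qmk (star x * x))
      have hcoord : (star x * x) n = star (x n) * x n := by
        rw [lp.infty_coeFn_mul]; rfl
      rw [hcoord, CStarRing.norm_star_mul_self]
    have h3 : L * L ≤ limsup (fun n => ‖x n‖ * ‖x n‖) atTop := by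
      rcases eq_or_lt_of_le hL0 with h | h
      · rw [← h, mul_zero]
        exact le_limsup_of_frequently_le
          (Frequently.of_forall fun n => mul_nonneg (norm_nonneg _) (norm_nonneg _)) hbdd2
      · refine le_of_forall_pos_le_add fun η hη => ?_
        set ε := min L (η / (2 * L)) with hεdef
        have hε : 0 < ε := lt_min h (div_pos hη (by linarith))
        have hεL : ε ≤ L := min_le_left _ _
        have hfreq : ∃ᶠ n in atTop, L - ε < ‖x n‖ :=
          frequently_lt_of_lt_limsup (limsup_norm_cobdd x) (sub_lt_self _ hε)
        have h4 : (L - ε) * (L - ε) ≤ limsup (fun n => ‖x n‖ * ‖x n‖) atTop := by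
          refine le_limsup_of_frequently_le (hfreq.mono fun n hn => ?_) hbdd2
          exact mul_le_mul hn.le hn.le (by linarith) (norm_nonneg _)
        have h5 : ε * (2 * L) ≤ η := by
          have hm : ε ≤ η / (2 * L) := min_le_right _ _
          calc ε * (2 * L) ≤ (η / (2 * L)) * (2 * L) :=
                mul_le_mul_of_nonneg_right hm (by linarith)
            _ = η := div_mul_cancel₀ η (by linarith)
        nlinarith
    calc ‖qmk A x‖ * ‖qmk A x‖ ≤ L * L := mul_le_mul h1 h1 (norm_nonneg _) hL0
      _ ≤ limsup (fun n => ‖x n‖ * ‖x n‖) atTop := h3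
      _ ≤ ‖qmk A (star x * x)‖ := h2
      _ = ‖star (qmk A x) * qmk A x‖ := by rw [qmk_mul, qmk_star]

noncomputable instance : NormedAlgebra ℂ (CalkQ (A := A)) :=
  { (inferInstance : Algebra ℂ (CalkQ (A := A))) with
    norm_smul_le := fun c a => norm_smul_le c a }

noncomputable instance : CStarAlgebra (CalkQ (A := A)) :=
  { (inferInstance : NormedRing (CalkQ (A := A))),
    (inferInstance : StarRing (CalkQ (A := A))),
    (inferInstance : CStarRing (CalkQ (A := A))),
    (inferInstance : NormedAlgebra ℂ (CalkQ (A := A))),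
    (inferInstance : StarModule ℂ (CalkQ (A := A))),
    (inferInstance : CompleteSpace (CalkQ (A := A))) with }

/-- `qmk` as a star algebra homomorphism. -/
noncomputable def qmkSAH : lp A ∞ →⋆ₐ[ℂ] CalkQ (A := A) where
  toFun := qmk A
  map_one' := rfl
  map_mul' _ _ := rfl
  map_zero' := rfl
  map_add' _ _ := rfl
  commutes' c := qmk_algebraMap c
  map_star' _ := rfl

/-- The coordinate map as a star algebra homomorphism. -/
noncomputable def coordSAH (n : ℕ) : lp A ∞ →⋆ₐ[ℂ] A n where
  toFun x := x n
  map_one' := congrFun lp.infty_coeFn_one n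
  map_mul' x y := congrFun (lp.infty_coeFn_mul x y) n
  map_zero' := congrFun (lp.coeFn_zero A ∞) n
  map_add' x y := congrFun (lp.coeFn_add x y) n
  commutes' _ := rfl
  map_star' _ := rfl

lemma map_polyEvalA {R S : Type*} [Ring R] [StarRing R] [Algebra ℂ R]
    [Ring S] [StarRing S] [Algebra ℂ S] (φ : R →⋆ₐ[ℂ] S) (p : (ℕ × ℕ) →₀ ℂ) (a : R) :
    φ (polyEvalA p a) = polyEvalA p (φ a) := by
  simp only [polyEvalA, Finsupp.sum, map_sum, map_smul, map_mul, map_pow, map_star]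

lemma pow_norm_le_one {R : Type*} [NormedRing R] [NormOneClass R] {a : R} (ha : ‖a‖ ≤ 1)
    (k : ℕ) : ‖a ^ k‖ ≤ 1 := by
  induction k with
  | zero => simp
  | succ n ih =>
    rw [pow_succ]
    exact (norm_mul_le _ _).trans (by nlinarith [norm_nonneg (a ^ n), norm_nonneg a])

lemma norm_polyEvalA_le {R : Type*} [CStarAlgebra R] [Nontrivial R]
    (p : (ℕ × ℕ) →₀ ℂ) (a : R) (ha : ‖a‖ ≤ 1) :
    ‖polyEvalA p a‖ ≤ ∑ kl ∈ p.support, ‖p kl‖ := by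
  rw [polyEvalA, Finsupp.sum]
  refine (norm_sum_le _ _).trans (Finset.sum_le_sum fun kl _ => ?_)
  rw [norm_smul]
  have h1 : ‖a ^ kl.1‖ ≤ 1 := pow_norm_le_one ha kl.1
  have h2 : ‖star a ^ kl.2‖ ≤ 1 := pow_norm_le_one (by rwa [norm_star]) kl.2
  have h3 : ‖a ^ kl.1 * star a ^ kl.2‖ ≤ 1 :=
    (norm_mul_le _ _).trans (by nlinarith [norm_nonneg (a ^ kl.1), norm_nonneg (star a ^ kl.2)])
  nlinarith [norm_nonneg (p kl), norm_nonneg (a ^ kl.1 * star a ^ kl.2)]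

lemma polyEvalC_continuous (p : (ℕ × ℕ) →₀ ℂ) : Continuous (polyEvalC p) := by
  have h : polyEvalC p = fun z : ℂ => ∑ kl ∈ p.support, p kl * z ^ kl.1 * (conj z) ^ kl.2 := rfl
  rw [h]
  exact continuous_finset_sum _ fun kl _ =>
    (continuous_const.mul (continuous_pow kl.1)).mul (RCLike.continuous_conj.pow kl.2)

lemma polyEvalA_eq_cfc {B : Type*} [CStarAlgebra B] (p : (ℕ × ℕ) →₀ ℂ) (b : B)
    (hb : IsStarNormal b) : polyEvalA p b = cfc (polyEvalC p) b := by
  have hsum : polyEvalC p = ∑ kl ∈ p.support, fun z : ℂ => p kl * z ^ kl.1 * (conj z) ^ kl.2 := by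
    ext z
    simp only [polyEvalC, Finsupp.sum, Finset.sum_apply]
  rw [hsum, cfc_sum _ b _ (fun kl _ =>
    ((continuous_const.mul (continuous_pow kl.1)).mul
      (RCLike.continuous_conj.pow kl.2)).continuousOn), polyEvalA, Finsupp.sum]
  refine Finset.sum_congr rfl fun kl _ => ?_
  have hfun : (fun z : ℂ => p kl * z ^ kl.1 * (conj z) ^ kl.2)
      = fun z : ℂ => p kl • (z ^ kl.1 * star z ^ kl.2) := by
    ext z
    simp only [smul_eq_mul, RCLike.star_def]
    ring
  rw [hfun, cfc_smul (p kl) _ b (by fun_prop), cfc_mul _ _ b (by fun_prop) (by fun_prop),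
    cfc_pow_id b kl.1 hb, cfc_pow _ kl.2 b (by fun_prop) hb, cfc_star_id b hb]

lemma imPart_eq_cfc {B : Type*} [CStarAlgebra B] (p : (ℕ × ℕ) →₀ ℂ) (b : B)
    (hb : IsStarNormal b) :
    ((2 * Complex.I)⁻¹ : ℂ) • (polyEvalA p b - star (polyEvalA p b)) =
      cfc (fun z => (((polyEvalC p z).im : ℝ) : ℂ)) b := by
  have hc : ContinuousOn (polyEvalC p) (spectrum ℂ b) := (polyEvalC_continuous p).continuousOn
  have hcs : ContinuousOn (fun z => star (polyEvalC p z)) (spectrum ℂ b) := by fun_prop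
  rw [polyEvalA_eq_cfc p b hb, ← cfc_star (polyEvalC p) b,
    ← cfc_sub (polyEvalC p) _ b hc hcs,
    ← cfc_smul ((2 * Complex.I)⁻¹ : ℂ) _ b (by fun_prop)]
  refine cfc_congr fun z _ => ?_
  have : polyEvalC p z - star (polyEvalC p z) = (2 * (polyEvalC p z).im : ℝ) * Complex.I :=
    Complex.sub_conj _
  rw [this]
  have h2 : (2 * Complex.I) ≠ 0 := by
    simp [Complex.I_ne_zero]
  field_simp
  push_cast
  rw [smul_eq_mul, div_mul_eq_mul_div, one_mul, div_eq_iff h2]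
  ring

lemma norm_imPart_le {B : Type*} [CStarAlgebra B] (p : (ℕ × ℕ) →₀ ℂ) (b : B)
    (hb : IsStarNormal b) {S : Set ℂ} (hspec : spectrum ℂ b ⊆ S) {M : ℝ} (hM : 0 ≤ M)
    (hMS : ∀ z ∈ S, |(polyEvalC p z).im| ≤ M) :
    ‖((2 * Complex.I)⁻¹ : ℂ) • (polyEvalA p b - star (polyEvalA p b))‖ ≤ M := by
  rw [imPart_eq_cfc p b hb]
  refine norm_cfc_le hM fun z hz => ?_
  rw [Complex.norm_real, Real.norm_eq_abs]
  exact hMS z (hspec hz)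

lemma resolvent_bound {B : Type*} [CStarAlgebra B] [Nontrivial B] {b w : B} {lam : ℂ} {Rj : ℝ}
    (hR : 0 < Rj) (h1 : (b - algebraMap ℂ B lam) * w = 1) (h2 : w * (b - algebraMap ℂ B lam) = 1)
    (hw : ‖w‖ ≤ Rj⁻¹) {z : ℂ} (hz : z ∈ spectrum ℂ b) : Rj ≤ ‖z - lam‖ := by
  set u : Bˣ := ⟨b - algebraMap ℂ B lam, w, h1, h2⟩ with hu
  have hmem : (z - lam) ∈ spectrum ℂ (u : B) := by
    rw [spectrum.mem_iff] at hz ⊢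
    have key : algebraMap ℂ B (z - lam) - (b - algebraMap ℂ B lam) = algebraMap ℂ B z - b := by
      rw [map_sub]; abel
    rw [key]
    exact hz
  have hz0 : z - lam ≠ 0 := by
    intro h
    rw [h] at hmem
    exact spectrum.zero_notMem ℂ u.isUnit hmem
  have hinv : (z - lam)⁻¹ ∈ spectrum ℂ ((u⁻¹ : Bˣ) : B) := by
    have := (spectrum.inv_mem_iff (r := Units.mk0 (z - lam) hz0) (a := u)).mp hmem
    simpa using this
  have hn : ‖(z - lam)⁻¹‖ ≤ ‖((u⁻¹ : Bˣ) : B)‖ := spectrum.norm_le_norm_of_mem hinv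
  have huinv : ((u⁻¹ : Bˣ) : B) = w := rfl
  rw [huinv, norm_inv] at hn
  have hzpos : 0 < ‖z - lam‖ := norm_pos_iff.mpr hz0
  have : ‖z - lam‖⁻¹ ≤ Rj⁻¹ := hn.trans hw
  exact (inv_le_inv₀ hzpos hR).mp this

lemma qmk_sub (x y : lp A ∞) : qmk A (x - y) = qmk A x - qmk A y :=
  Submodule.Quotient.mk_sub _

theorem contradiction_core {m : ℕ} (lam : Fin m → ℂ) (R : Fin m → ℝ) (hR : ∀ j, 0 < R j)
    {S : Set ℂ} (hS : S = {z : ℂ | ‖z‖ ≤ 1 ∧ ∀ j, R j ≤ ‖z - lam j‖})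
    (p : (ℕ × ℕ) →₀ ℂ) {ε : ℝ} (hε : 0 < ε) {M : ℝ}
    (hM0 : 0 ≤ M) (hMub : ∀ z ∈ S, |(polyEvalC p z).im| ≤ M)
    (Aa : ℕ → Type v) [∀ n, CStarAlgebra (Aa n)] (δs : ℕ → ℝ) (as : ∀ n, Aa n)
    (hδ : ∀ n, 0 ≤ δs n) (h1 : ∀ n, ‖as n‖ ≤ 1)
    (h2 : ∀ n, ‖as n * star (as n) - star (as n) * as n‖ ≤ δs n)
    (h3 : ∀ n j, IsUnit (as n - algebraMap ℂ (Aa n) (lam j)))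
    (h4 : ∀ n j, ‖Ring.inverse (as n - algebraMap ℂ (Aa n) (lam j))‖ ≤ (R j)⁻¹)
    (h5 : ∀ n : ℕ, M + ε + (n : ℝ) * δs n <
      ‖((2 * Complex.I)⁻¹ : ℂ) • (polyEvalA p (as n) - star (polyEvalA p (as n)))‖) :
    False := by
  have hpos : ∀ n, (0:ℝ) <
      ‖((2 * Complex.I)⁻¹ : ℂ) • (polyEvalA p (as n) - star (polyEvalA p (as n)))‖ := by
    intro n
    have h0 := mul_nonneg (Nat.cast_nonneg (α := ℝ) n) (hδ n)
    exact lt_trans (show (0:ℝ) < M + ε + (n : ℝ) * δs n by linarith) (h5 n)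
  haveI hnt : ∀ n, Nontrivial (Aa n) := fun n =>
    nontrivial_of_ne
      (((2 * Complex.I)⁻¹ : ℂ) • (polyEvalA p (as n) - star (polyEvalA p (as n)))) 0
      (fun h => by
        have hp2 := hpos n
        rw [h, norm_zero] at hp2
        exact lt_irrefl _ hp2)
  set K := ∑ kl ∈ p.support, ‖p kl‖ with hK
  have hvK : ∀ n,
      ‖((2 * Complex.I)⁻¹ : ℂ) • (polyEvalA p (as n) - star (polyEvalA p (as n)))‖ ≤ K := by
    intro n
    rw [norm_smul]
    have hhalf : ‖((2 * Complex.I)⁻¹ : ℂ)‖ = 2⁻¹ := by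
      rw [norm_inv, norm_mul, Complex.norm_I, mul_one]
      norm_num
    have hP := norm_polyEvalA_le p (as n) (h1 n)
    have hsub : ‖polyEvalA p (as n) - star (polyEvalA p (as n))‖ ≤ 2 * K := by
      refine (norm_sub_le _ _).trans ?_
      rw [norm_star]
      linarith
    calc ‖((2 * Complex.I)⁻¹ : ℂ)‖ * ‖polyEvalA p (as n) - star (polyEvalA p (as n))‖
        ≤ 2⁻¹ * (2 * K) := by
          rw [hhalf]
          exact mul_le_mul_of_nonneg_left hsub (by norm_num)
      _ = K := by ring
  have hδtend : Tendsto δs atTop (𝓝 0) := by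
    have hbound : ∀ᶠ n : ℕ in atTop, δs n ≤ K / n := by
      filter_upwards [eventually_ge_atTop 1] with n hn
      have h5' : M + ε + (n : ℝ) * δs n ≤ K := (h5 n).le.trans (hvK n)
      have hn' : (0:ℝ) < n := by exact_mod_cast hn
      rw [le_div_iff₀ hn']
      have : δs n * n = (n : ℝ) * δs n := by ring
      rw [this]
      linarith
    exact tendsto_of_tendsto_of_tendsto_of_le_of_le' tendsto_const_nhds
      (tendsto_const_div_atTop_nhds_zero_nat K) (Eventually.of_forall hδ) hbound
  have hxmem : Memℓp (fun n => as n) ∞ :=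
    memℓp_infty ⟨1, by rintro r ⟨n, rfl⟩; exact h1 n⟩
  set x : lp Aa ∞ := ⟨fun n => as n, hxmem⟩ with hx
  set b : CalkQ (A := Aa) := qmk Aa x with hb
  have hbnorm : ‖b‖ ≤ 1 :=
    (norm_qmk_le x).trans (lp.norm_le_of_forall_le zero_le_one fun n => h1 n)
  -- normality of b
  have hbnormal : IsStarNormal b := by
    constructor
    have hmem : star x * x - x * star x ∈ c0I Aa := by
      rw [mem_c0I_iff]
      have hcoord : ∀ n, ‖(star x * x - x * star x) n‖ ≤ δs n := by
        intro n
        have e1 : (star x * x - x * star x) n =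
            star (as n) * as n - as n * star (as n) := by
          rw [coeFn_sub_apply, lp.infty_coeFn_mul, lp.infty_coeFn_mul]
          rfl
        rw [e1, ← norm_neg, neg_sub]
        exact h2 n
      exact tendsto_of_tendsto_of_tendsto_of_le_of_le' tendsto_const_nhds hδtend
        (Eventually.of_forall fun n => norm_nonneg _) (Eventually.of_forall hcoord)
    show star b * b = b * star b
    rw [hb, ← qmk_star, ← qmk_mul, ← qmk_mul, qmk_def, qmk_def, Submodule.Quotient.eq]
    exact hmem
  -- the imaginary part element
  set v : lp Aa ∞ :=
    ((2 * Complex.I)⁻¹ : ℂ) • (polyEvalA p x - star (polyEvalA p x)) with hv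
  have hvcoord : ∀ n, v n =
      ((2 * Complex.I)⁻¹ : ℂ) • (polyEvalA p (as n) - star (polyEvalA p (as n))) := by
    intro n
    have hmain := map_polyEvalA (coordSAH (A := Aa) n) p x
    calc v n = coordSAH (A := Aa) n v := rfl
      _ = _ := by
        rw [hv, map_smul, map_sub, map_star, hmain]
        rfl
  have hlow : ∀ n, M + ε ≤ ‖v n‖ := by
    intro n
    rw [hvcoord n]
    have := mul_nonneg (Nat.cast_nonneg (α := ℝ) n) (hδ n)
    have h5n := h5 n
    linarith
  have hvlow : M + ε ≤ ‖qmk Aa v‖ :=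
    le_trans (le_limsup_of_frequently_le (Frequently.of_forall hlow)
      (limsup_norm_bddAbove v)) (limsup_le_norm_qmk v)
  haveI : Nontrivial (CalkQ (A := Aa)) :=
    nontrivial_of_ne (qmk Aa v) 0 (by
      intro h
      rw [h, norm_zero] at hvlow
      linarith)
  -- spectrum inclusion
  have hspec : spectrum ℂ b ⊆ S := by
    intro z hz
    rw [hS]
    refine ⟨(spectrum.norm_le_norm_of_mem hz).trans hbnorm, fun j => ?_⟩
    have hwmem : Memℓp (fun n => Ring.inverse (as n - algebraMap ℂ (Aa n) (lam j))) ∞ :=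
      memℓp_infty ⟨(R j)⁻¹, by rintro r ⟨n, rfl⟩; exact h4 n j⟩
    set w : lp Aa ∞ := ⟨fun n => Ring.inverse (as n - algebraMap ℂ (Aa n) (lam j)), hwmem⟩
      with hw
    have hsubcoord : ∀ n, (x - algebraMap ℂ (lp Aa ∞) (lam j)) n =
        as n - algebraMap ℂ (Aa n) (lam j) := by
      intro n
      rw [coeFn_sub_apply]
      rfl
    have hc1 : (x - algebraMap ℂ (lp Aa ∞) (lam j)) * w = 1 := by
      apply lp.ext
      funext n
      have := congrFun (lp.infty_coeFn_mul (x - algebraMap ℂ (lp Aa ∞) (lam j)) w) n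
      rw [lp.infty_coeFn_one]
      calc (((x - algebraMap ℂ (lp Aa ∞) (lam j)) * w) : ∀ n, Aa n) n
          = (x - algebraMap ℂ (lp Aa ∞) (lam j)) n * w n := this
        _ = (as n - algebraMap ℂ (Aa n) (lam j)) *
              Ring.inverse (as n - algebraMap ℂ (Aa n) (lam j)) := by rw [hsubcoord n]
        _ = 1 := Ring.mul_inverse_cancel _ (h3 n j)
    have hc2 : w * (x - algebraMap ℂ (lp Aa ∞) (lam j)) = 1 := by
      apply lp.ext
      funext n
      have := congrFun (lp.infty_coeFn_mul w (x - algebraMap ℂ (lp Aa ∞) (lam j))) n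
      rw [lp.infty_coeFn_one]
      calc ((w * (x - algebraMap ℂ (lp Aa ∞) (lam j))) : ∀ n, Aa n) n
          = w n * (x - algebraMap ℂ (lp Aa ∞) (lam j)) n := this
        _ = Ring.inverse (as n - algebraMap ℂ (Aa n) (lam j)) *
              (as n - algebraMap ℂ (Aa n) (lam j)) := by rw [hsubcoord n]
        _ = 1 := Ring.inverse_mul_cancel _ (h3 n j)
    have hqsub : b - algebraMap ℂ (CalkQ (A := Aa)) (lam j) =
        qmk Aa (x - algebraMap ℂ (lp Aa ∞) (lam j)) := by
      rw [qmk_sub, qmk_algebraMap, hb]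
    have hq1 : (b - algebraMap ℂ (CalkQ (A := Aa)) (lam j)) * qmk Aa w = 1 := by
      rw [hqsub, ← qmk_mul, hc1, qmk_one]
    have hq2 : qmk Aa w * (b - algebraMap ℂ (CalkQ (A := Aa)) (lam j)) = 1 := by
      rw [hqsub, ← qmk_mul, hc2, qmk_one]
    have hwn : ‖qmk Aa w‖ ≤ (R j)⁻¹ :=
      (norm_qmk_le w).trans (lp.norm_le_of_forall_le (inv_nonneg.mpr (hR j).le) fun n => h4 n j)
    exact resolvent_bound (hR j) hq1 hq2 hwn hz
  -- transfer the imaginary part to the quotient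
  have hqv : qmk Aa v =
      ((2 * Complex.I)⁻¹ : ℂ) • (polyEvalA p b - star (polyEvalA p b)) := by
    have hmain := map_polyEvalA (qmkSAH (A := Aa)) p x
    calc qmk Aa v = qmkSAH (A := Aa) v := rfl
      _ = _ := by
        rw [hv, map_smul, map_sub, map_star, hmain]
        rfl
  have hfinal : ‖qmk Aa v‖ ≤ M := by
    rw [hqv]
    exact norm_imPart_le p b hbnormal hspec hM0 hMub
  linarith

end Stmt5Aux

open Stmt5Aux in
theorem stmt5.{u} (m : ℕ) (lam : Fin m → ℂ) (R : Fin m → ℝ) (hR : ∀ j, 0 < R j)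
    (S : Set ℂ) (hS : S = {z : ℂ | ‖z‖ ≤ 1 ∧ ∀ j, R j ≤ ‖z - lam j‖})
    (hSne : S.Nonempty)
    (p : (ℕ × ℕ) →₀ ℂ) (ε : ℝ) (hε : 0 < ε) :
    ∃ C : ℝ, 0 ≤ C ∧
      ∀ (A : Type u) [CStarAlgebra A], ∀ δ : ℝ, 0 ≤ δ →
        ∀ a : A, ‖a‖ ≤ 1 → ‖a * star a - star a * a‖ ≤ δ →
          (∀ j, IsUnit (a - algebraMap ℂ A (lam j))) →
          (∀ j, ‖Ring.inverse (a - algebraMap ℂ A (lam j))‖ ≤ (R j)⁻¹) →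
            ‖((2 * Complex.I)⁻¹ : ℂ) • (polyEvalA p a - star (polyEvalA p a))‖ ≤
              sSup ((fun z => |(polyEvalC p z).im|) '' S) + ε + C * δ := by
  classical
  set M := sSup ((fun z => |(polyEvalC p z).im|) '' S) with hM
  have hScompact : IsCompact S := by
    have h1 : S = {z : ℂ | ‖z‖ ≤ 1} ∩ ⋂ j, {z : ℂ | R j ≤ ‖z - lam j‖} := by
      rw [hS]; ext z; simp [Set.mem_iInter, Set.mem_setOf_eq]
    rw [h1]
    refine Metric.isCompact_of_isClosed_isBounded ?_ ?_
    · exact (isClosed_le continuous_norm continuous_const).inter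
        (isClosed_iInter fun j => isClosed_le continuous_const
          ((continuous_id.sub continuous_const).norm))
    · refine (Metric.isBounded_closedBall (x := (0:ℂ)) (r := 1)).subset ?_
      rintro z ⟨hz1, -⟩
      simpa [Metric.mem_closedBall, dist_zero_right] using hz1
  have hMub : ∀ z ∈ S, |(polyEvalC p z).im| ≤ M := fun z hz =>
    le_csSup ((hScompact.image
      ((Complex.continuous_im.comp (polyEvalC_continuous p)).abs)).bddAbove) ⟨z, hz, rfl⟩
  have hM0 : 0 ≤ M := Real.sSup_nonneg (fun r hr => by obtain ⟨z, hz, rfl⟩ := hr; positivity)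
  by_contra hcon
  have hcon' : ∀ n : ℕ, ∃ (Aa : Type u) (_ : CStarAlgebra Aa) (δ : ℝ) (a : Aa),
      0 ≤ δ ∧ ‖a‖ ≤ 1 ∧ ‖a * star a - star a * a‖ ≤ δ ∧
      (∀ j, IsUnit (a - algebraMap ℂ Aa (lam j))) ∧
      (∀ j, ‖Ring.inverse (a - algebraMap ℂ Aa (lam j))‖ ≤ (R j)⁻¹) ∧
      M + ε + (n : ℝ) * δ <
        ‖((2 * Complex.I)⁻¹ : ℂ) • (polyEvalA p a - star (polyEvalA p a))‖ := by
    intro n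
    by_contra hno
    push_neg at hno
    refine hcon ⟨(n : ℝ), Nat.cast_nonneg n, ?_⟩
    intro Aa instA δ hδ a ha1 ha2 ha3 ha4
    exact hno Aa instA δ a hδ ha1 ha2 ha3 ha4
  choose Aa instA δs as hδ h1 h2 h3 h4 h5 using hcon'
  exact @contradiction_core.{u} m lam R hR S hS p ε hε M hM0 hMub Aa instA δs as hδ h1 h2 h3 h4 h5
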